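/- Let G be a chordal graph containing a 6-cycle on vertices a, b, c, d, e, f with edges ab, bc, cd, de, ef, fa. If be, bf, ce, and cf are not edges of G, then ad is an edge of G. -/
import Mathlib


open SimpleGraph

/-- `f : ZMod n → V` traces an induced cycle of length `n` in `G`:
`f` is injective and adjacency holds exactly between consecutive vertices. -/
def IsInducedCycle {V : Type*} (G : SimpleGraph V) (n : ℕ) (f : ZMod n → V) : Prop :=
  Function.Injective f ∧ ∀ i j : ZMod n, G.Adj (f i) (f j) ↔ (j = i + 1 ∨ i = j + 1)

/-- A graph is chordal if it has no induced cycle of length at least 4. -/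
def Chordal {V : Type*} (G : SimpleGraph V) : Prop :=
  ∀ n, 4 ≤ n → ∀ f : ZMod n → V, ¬ IsInducedCycle G n f

/-- `G'` is a chordal completion of `G`. -/
def ChordalCompletion {V : Type*} (G G' : SimpleGraph V) : Prop :=
  Chordal G' ∧ G ≤ G'

/-- Minimal chordal completion: no proper spanning subgraph containing `G` is chordal. -/
def MinimalChordalCompletion {V : Type*} (G G' : SimpleGraph V) : Prop :=
  ChordalCompletion G G' ∧ ∀ H, ChordalCompletion G H → H ≤ G' → H = G'

lemma no4 {V : Type*} (G : SimpleGraph V) (hG : Chordal G) (w x y z : V)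
    (e1 : G.Adj w x) (e2 : G.Adj x y) (e3 : G.Adj y z) (e4 : G.Adj z w)
    (n1 : ¬ G.Adj w y) (n2 : ¬ G.Adj x z) (d1 : w ≠ y) (d2 : x ≠ z) : False := by
  apply hG 4 (le_refl 4) ![w, x, y, z]
  have e1' := e1.symm; have e2' := e2.symm; have e3' := e3.symm; have e4' := e4.symm
  have n1' : ¬ G.Adj y w := fun h => n1 h.symm
  have n2' : ¬ G.Adj z x := fun h => n2 h.symm
  have d1' := d1.symm; have d2' := d2.symm
  have dwx := e1.ne; have dxy := e2.ne; have dyz := e3.ne; have dzw := e4.ne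
  have dwx' := dwx.symm; have dxy' := dxy.symm; have dyz' := dyz.symm; have dzw' := dzw.symm
  have h4 : ∀ i : ZMod 4, i = 0 ∨ i = 1 ∨ i = 2 ∨ i = 3 := by decide
  have f0 : (![w, x, y, z] : ZMod 4 → V) 0 = w := rfl
  have f1 : (![w, x, y, z] : ZMod 4 → V) 1 = x := rfl
  have f2 : (![w, x, y, z] : ZMod 4 → V) 2 = y := rfl
  have f3 : (![w, x, y, z] : ZMod 4 → V) 3 = z := rfl
  constructor
  · intro i j h
    rcases h4 i with rfl | rfl | rfl | rfl <;> rcases h4 j with rfl | rfl | rfl | rfl <;>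
      simp only [f0, f1, f2, f3] at h <;> first | rfl | exact absurd h ‹_›
  · intro i j
    rcases h4 i with rfl | rfl | rfl | rfl <;> rcases h4 j with rfl | rfl | rfl | rfl <;>
      simp only [f0, f1, f2, f3] <;>
      first
        | exact iff_of_true ‹_› (by decide)
        | exact iff_of_false ‹_› (by decide)
        | exact iff_of_false (G.irrefl) (by decide)

lemma no5 {V : Type*} (G : SimpleGraph V) (hG : Chordal G) (w x y z u : V)
    (e1 : G.Adj w x) (e2 : G.Adj x y) (e3 : G.Adj y z) (e4 : G.Adj z u) (e5 : G.Adj u w)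
    (n1 : ¬ G.Adj w y) (n2 : ¬ G.Adj w z) (n3 : ¬ G.Adj x z) (n4 : ¬ G.Adj x u)
    (n5 : ¬ G.Adj y u)
    (d1 : w ≠ y) (d2 : w ≠ z) (d3 : x ≠ z) (d4 : x ≠ u) (d5 : y ≠ u) : False := by
  apply hG 5 (by norm_num) ![w, x, y, z, u]
  have e1' := e1.symm; have e2' := e2.symm; have e3' := e3.symm; have e4' := e4.symm
  have e5' := e5.symm
  have n1' : ¬ G.Adj y w := fun h => n1 h.symm
  have n2' : ¬ G.Adj z w := fun h => n2 h.symm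
  have n3' : ¬ G.Adj z x := fun h => n3 h.symm
  have n4' : ¬ G.Adj u x := fun h => n4 h.symm
  have n5' : ¬ G.Adj u y := fun h => n5 h.symm
  have d1' := d1.symm; have d2' := d2.symm; have d3' := d3.symm; have d4' := d4.symm
  have d5' := d5.symm
  have a1 := e1.ne; have a2 := e2.ne; have a3 := e3.ne; have a4 := e4.ne; have a5 := e5.ne
  have a1' := a1.symm; have a2' := a2.symm; have a3' := a3.symm; have a4' := a4.symm
  have a5' := a5.symm
  have h5 : ∀ i : ZMod 5, i = 0 ∨ i = 1 ∨ i = 2 ∨ i = 3 ∨ i = 4 := by decide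
  have f0 : (![w, x, y, z, u] : ZMod 5 → V) 0 = w := rfl
  have f1 : (![w, x, y, z, u] : ZMod 5 → V) 1 = x := rfl
  have f2 : (![w, x, y, z, u] : ZMod 5 → V) 2 = y := rfl
  have f3 : (![w, x, y, z, u] : ZMod 5 → V) 3 = z := rfl
  have f4 : (![w, x, y, z, u] : ZMod 5 → V) 4 = u := rfl
  constructor
  · intro i j h
    rcases h5 i with rfl | rfl | rfl | rfl | rfl <;>
      rcases h5 j with rfl | rfl | rfl | rfl | rfl <;>
      simp only [f0, f1, f2, f3, f4] at h <;> first | rfl | exact absurd h ‹_›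
  · intro i j
    rcases h5 i with rfl | rfl | rfl | rfl | rfl <;>
      rcases h5 j with rfl | rfl | rfl | rfl | rfl <;>
      simp only [f0, f1, f2, f3, f4] <;>
      first
        | exact iff_of_true ‹_› (by decide)
        | exact iff_of_false ‹_› (by decide)
        | exact iff_of_false (G.irrefl) (by decide)

lemma no6 {V : Type*} (G : SimpleGraph V) (hG : Chordal G) (w x y z u v : V)
    (e1 : G.Adj w x) (e2 : G.Adj x y) (e3 : G.Adj y z) (e4 : G.Adj z u) (e5 : G.Adj u v)
    (e6 : G.Adj v w)
    (n1 : ¬ G.Adj w y) (n2 : ¬ G.Adj w z) (n3 : ¬ G.Adj w u) (n4 : ¬ G.Adj x z)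
    (n5 : ¬ G.Adj x u) (n6 : ¬ G.Adj x v) (n7 : ¬ G.Adj y u) (n8 : ¬ G.Adj y v)
    (n9 : ¬ G.Adj z v)
    (d1 : w ≠ y) (d2 : w ≠ z) (d3 : w ≠ u) (d4 : x ≠ z) (d5 : x ≠ u) (d6 : x ≠ v)
    (d7 : y ≠ u) (d8 : y ≠ v) (d9 : z ≠ v) : False := by
  apply hG 6 (by norm_num) ![w, x, y, z, u, v]
  have e1' := e1.symm; have e2' := e2.symm; have e3' := e3.symm; have e4' := e4.symm
  have e5' := e5.symm; have e6' := e6.symm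
  have n1' : ¬ G.Adj y w := fun h => n1 h.symm
  have n2' : ¬ G.Adj z w := fun h => n2 h.symm
  have n3' : ¬ G.Adj u w := fun h => n3 h.symm
  have n4' : ¬ G.Adj z x := fun h => n4 h.symm
  have n5' : ¬ G.Adj u x := fun h => n5 h.symm
  have n6' : ¬ G.Adj v x := fun h => n6 h.symm
  have n7' : ¬ G.Adj u y := fun h => n7 h.symm
  have n8' : ¬ G.Adj v y := fun h => n8 h.symm
  have n9' : ¬ G.Adj v z := fun h => n9 h.symm
  have d1' := d1.symm; have d2' := d2.symm; have d3' := d3.symm; have d4' := d4.symm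
  have d5' := d5.symm; have d6' := d6.symm; have d7' := d7.symm; have d8' := d8.symm
  have d9' := d9.symm
  have a1 := e1.ne; have a2 := e2.ne; have a3 := e3.ne; have a4 := e4.ne; have a5 := e5.ne
  have a6 := e6.ne
  have a1' := a1.symm; have a2' := a2.symm; have a3' := a3.symm; have a4' := a4.symm
  have a5' := a5.symm; have a6' := a6.symm
  have h6 : ∀ i : ZMod 6, i = 0 ∨ i = 1 ∨ i = 2 ∨ i = 3 ∨ i = 4 ∨ i = 5 := by decide
  have f0 : (![w, x, y, z, u, v] : ZMod 6 → V) 0 = w := rfl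
  have f1 : (![w, x, y, z, u, v] : ZMod 6 → V) 1 = x := rfl
  have f2 : (![w, x, y, z, u, v] : ZMod 6 → V) 2 = y := rfl
  have f3 : (![w, x, y, z, u, v] : ZMod 6 → V) 3 = z := rfl
  have f4 : (![w, x, y, z, u, v] : ZMod 6 → V) 4 = u := rfl
  have f5 : (![w, x, y, z, u, v] : ZMod 6 → V) 5 = v := rfl
  constructor
  · intro i j h
    rcases h6 i with rfl | rfl | rfl | rfl | rfl | rfl <;>
      rcases h6 j with rfl | rfl | rfl | rfl | rfl | rfl <;>
      simp only [f0, f1, f2, f3, f4, f5] at h <;>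
      first | rfl | exact absurd h ‹_›
  · intro i j
    rcases h6 i with rfl | rfl | rfl | rfl | rfl | rfl <;>
      rcases h6 j with rfl | rfl | rfl | rfl | rfl | rfl <;>
      simp only [f0, f1, f2, f3, f4, f5] <;>
      first
        | exact iff_of_true ‹_› (by decide)
        | exact iff_of_false ‹_› (by decide)
        | exact iff_of_false (G.irrefl) (by decide)

theorem stmt_7 {V : Type*} (G : SimpleGraph V) (hG : Chordal G)
    (a b c d e f : V) (hdist : [a, b, c, d, e, f].Pairwise (· ≠ ·))
    (hab : G.Adj a b) (hbc : G.Adj b c) (hcd : G.Adj c d)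
    (hde : G.Adj d e) (hef : G.Adj e f) (hfa : G.Adj f a)
    (hbe : ¬ G.Adj b e) (hbf : ¬ G.Adj b f)
    (hce : ¬ G.Adj c e) (hcf : ¬ G.Adj c f) :
    G.Adj a d := by
  simp only [List.pairwise_cons, List.mem_cons, List.not_mem_nil] at hdist
  obtain ⟨h1, h2, h3, h4, -⟩ := hdist
  have dac : a ≠ c := h1 c (by tauto)
  have dad : a ≠ d := h1 d (by tauto)
  have dae : a ≠ e := h1 e (by tauto)
  have dbd : b ≠ d := h2 d (by tauto)
  have dbe : b ≠ e := h2 e (by tauto)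
  have dbf : b ≠ f := h2 f (by tauto)
  have dce : c ≠ e := h3 e (by tauto)
  have dcf : c ≠ f := h3 f (by tauto)
  have ddf : d ≠ f := h4 f (by tauto)
  by_contra had
  have had' : ¬ G.Adj d a := fun h => had h.symm
  by_cases hac : G.Adj a c
  · by_cases hae : G.Adj a e
    · exact no4 G hG a c d e hac hcd hde hae.symm had hce dad dce
    · by_cases hdf : G.Adj d f
      · exact no4 G hG a c d f hac hcd hdf hfa had hcf dad dcf
      · exact no5 G hG c d e f a hcd hde hef hfa hac hce hcf hdf had'
          (fun h => hae h.symm) dce dcf ddf dad.symm dae.symm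
  · by_cases hbd : G.Adj b d
    · by_cases hae : G.Adj a e
      · exact no4 G hG a b d e hab hbd hde hae.symm had hbe dad dbe
      · by_cases hdf : G.Adj d f
        · exact no4 G hG a b d f hab hbd hdf hfa had hbf dad dbf
        · exact no5 G hG b d e f a hbd hde hef hfa hab hbe hbf hdf had'
            (fun h => hae h.symm) dbe dbf ddf dad.symm dae.symm
    · by_cases hae : G.Adj a e
      · exact no5 G hG a b c d e hab hbc hcd hde hae.symm hac had hbd hbe hce
          dac dad dbd dbe dce
      · by_cases hdf : G.Adj d f
        · exact no5 G hG a b c d f hab hbc hcd hdf hfa hac had hbd hbf hcf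
            dac dad dbd dbf dcf
        · exact no6 G hG a b c d e f hab hbc hcd hde hef hfa hac had hae hbd hbe hbf
            hce hcf hdf dac dad dae dbd dbe dbf dce dcf ddf
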